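/- Let p ∈ ℕ, let E = EuclideanSpace ℝ (Fin p), let L > 0, and let S : E → E be L-Lipschitz. Let t ∈ ℝ satisfy 0 ≤ t, t ≤ 1 and t ≤ 1/(12·L). Then for all a₀, z ∈ E, writing a_t := Real.exp t • a₀ + (2·(Real.exp t − 1)) • S a₀ + Real.sqrt (Real.exp t − 1) • z, one has ‖S a_t − S a₀‖ ≤ 3·L·t·‖a₀‖ + 6·L·t·‖S a_t‖ + 3·L·Real.sqrt t·‖z‖. -/
import Mathlib


theorem stmt0 (p : ℕ) (L : ℝ) (hL : 0 < L)
    (S : EuclideanSpace ℝ (Fin p) → EuclideanSpace ℝ (Fin p))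
    (hS : ∀ a a' : EuclideanSpace ℝ (Fin p), ‖S a - S a'‖ ≤ L * ‖a - a'‖)
    (t : ℝ) (ht0 : 0 ≤ t) (ht1 : t ≤ 1) (ht2 : t ≤ 1 / (12 * L))
    (a₀ z : EuclideanSpace ℝ (Fin p)) :
    ‖S (Real.exp t • a₀ + (2 * (Real.exp t - 1)) • S a₀ +
        Real.sqrt (Real.exp t - 1) • z) - S a₀‖ ≤
      3 * L * t * ‖a₀‖ +
        6 * L * t * ‖S (Real.exp t • a₀ + (2 * (Real.exp t - 1)) • S a₀ +
          Real.sqrt (Real.exp t - 1) • z)‖ +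
        3 * L * Real.sqrt t * ‖z‖ := by
  set A := Real.exp t • a₀ + (2 * (Real.exp t - 1)) • S a₀ +
      Real.sqrt (Real.exp t - 1) • z with hA
  -- exp t - 1 ≥ 0
  have he0 : 0 ≤ Real.exp t - 1 := by
    have := Real.add_one_le_exp t; linarith
  -- exp t - 1 ≤ 2 t  (convexity of exp on [0,1])
  have he2 : Real.exp t - 1 ≤ 2 * t := by
    have hc := convexOn_exp.2 (Set.mem_univ (0:ℝ)) (Set.mem_univ (1:ℝ))
      (by linarith : (0:ℝ) ≤ 1 - t) ht0 (by ring)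
    simp only [smul_eq_mul, mul_zero, mul_one, zero_add, Real.exp_zero] at hc
    have hE : Real.exp 1 ≤ 3 := by
      have := Real.exp_one_lt_d9; linarith
    nlinarith [hc]
  -- sqrt (exp t - 1) ≤ 2 sqrt t
  have hsq : Real.sqrt (Real.exp t - 1) ≤ 2 * Real.sqrt t := by
    have h1 : Real.sqrt (Real.exp t - 1) ≤ Real.sqrt (4 * t) :=
      Real.sqrt_le_sqrt (by linarith)
    have h2 : Real.sqrt (4 * t) = 2 * Real.sqrt t := by
      rw [show (4:ℝ) * t = 2 ^ 2 * t by ring, Real.sqrt_mul (by positivity),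
        Real.sqrt_sq (by norm_num : (0:ℝ) ≤ 2)]
    linarith [h1, h2.le]
  have hsq0 : 0 ≤ Real.sqrt t := Real.sqrt_nonneg t
  -- difference
  have hdiff : A - a₀ = (Real.exp t - 1) • a₀ + (2 * (Real.exp t - 1)) • S a₀ +
      Real.sqrt (Real.exp t - 1) • z := by
    rw [hA]; module
  have hkey : ‖S A - S a₀‖ ≤ L * ((Real.exp t - 1) * ‖a₀‖ +
      (2 * (Real.exp t - 1)) * ‖S a₀‖ + Real.sqrt (Real.exp t - 1) * ‖z‖) := by
    refine (hS A a₀).trans ?_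
    gcongr
    rw [hdiff]
    refine (norm_add₃_le).trans ?_
    rw [norm_smul, norm_smul, norm_smul]
    simp only [Real.norm_eq_abs]
    rw [abs_of_nonneg he0, abs_of_nonneg (by linarith : (0:ℝ) ≤ 2 * (Real.exp t - 1)),
      abs_of_nonneg (Real.sqrt_nonneg _)]
  -- triangle for S a₀
  have htri : ‖S a₀‖ ≤ ‖S A‖ + ‖S A - S a₀‖ := by
    have := norm_sub_norm_le (S A) (S a₀)
    linarith [abs_le.mp (abs_norm_sub_norm_le (S A) (S a₀))]
  -- 12 L t ≤ 1
  have hLt : 12 * L * t ≤ 1 := by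
    have h12 : (0:ℝ) < 12 * L := by positivity
    have := (le_div_iff₀ h12).mp ht2
    linarith
  have hD0 : (0:ℝ) ≤ ‖S A - S a₀‖ := norm_nonneg _
  have hA0 : (0:ℝ) ≤ ‖a₀‖ := norm_nonneg _
  have hSA0 : (0:ℝ) ≤ ‖S A‖ := norm_nonneg _
  have hz0 : (0:ℝ) ≤ ‖z‖ := norm_nonneg _
  have hSa0 : (0:ℝ) ≤ ‖S a₀‖ := norm_nonneg _
  have hmain : ‖S A - S a₀‖ ≤ L * (2 * t * ‖a₀‖ + 4 * t * (‖S A‖ + ‖S A - S a₀‖)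
      + 2 * Real.sqrt t * ‖z‖) := by
    refine hkey.trans ?_
    have h1 : (Real.exp t - 1) * ‖a₀‖ ≤ 2 * t * ‖a₀‖ := by nlinarith
    have h2 : (2 * (Real.exp t - 1)) * ‖S a₀‖ ≤ 4 * t * (‖S A‖ + ‖S A - S a₀‖) := by
      nlinarith
    have h3 : Real.sqrt (Real.exp t - 1) * ‖z‖ ≤ 2 * Real.sqrt t * ‖z‖ := by nlinarith
    have := hL.le
    nlinarith
  nlinarith [mul_nonneg (mul_nonneg hL.le ht0) hA0,
    mul_nonneg (mul_nonneg hL.le ht0) hSA0,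
    mul_nonneg (mul_nonneg hL.le hsq0) hz0,
    mul_nonneg (mul_nonneg hL.le ht0) hD0]
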